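/- For every pair of positive integers l and m, there exists a positive integer p such that for every set X with p elements and every partition of the l-element subsets of X into two classes R and B, there exists a subset Y of X with m elements such that all l-element subsets of Y lie in R or all lie in B. -/

import Mathlib

theorem ramsey_core (l : ℕ) : ∀ m₀ m₁ : ℕ, ∃ p : ℕ,
    ∀ (α : Type) [DecidableEq α] (c : Finset α → Bool) (X : Finset α), p ≤ X.card →
      ∃ (b : Bool) (Y : Finset α), Y ⊆ X ∧ (cond b m₁ m₀) ≤ Y.card ∧
        ∀ s ⊆ Y, s.card = l → c s = b := by
  induction l with
  | zero =>
    intro m₀ m₁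
    refine ⟨max m₀ m₁, fun α _ c X hX => ⟨c ∅, X, subset_rfl, ?_, ?_⟩⟩
    · cases c ∅
      · exact le_trans (le_max_left _ _) hX
      · exact le_trans (le_max_right _ _) hX
    · intro s _ h0
      rw [Finset.card_eq_zero] at h0
      rw [h0]
  | succ l ih =>
    suffices h : ∀ n m₀ m₁, m₀ + m₁ ≤ n → ∃ p : ℕ,
        ∀ (α : Type) [DecidableEq α] (c : Finset α → Bool) (X : Finset α), p ≤ X.card →
          ∃ (b : Bool) (Y : Finset α), Y ⊆ X ∧ (cond b m₁ m₀) ≤ Y.card ∧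
            ∀ s ⊆ Y, s.card = l + 1 → c s = b by
      intro m₀ m₁; exact h (m₀ + m₁) m₀ m₁ le_rfl
    intro n
    induction n with
    | zero =>
      intro m₀ m₁ hn
      refine ⟨0, fun α _ c X _ => ⟨false, ∅, Finset.empty_subset X, by simp; omega, ?_⟩⟩
      intro s hs hcard
      rw [Finset.subset_empty.mp hs, Finset.card_empty] at hcard
      omega
    | succ n ihn =>
      intro m₀ m₁ hn
      rcases Nat.eq_zero_or_pos m₀ with hm0 | hm0
      · refine ⟨0, fun α _ c X _ => ⟨false, ∅, Finset.empty_subset X, by simp; omega, ?_⟩⟩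
        intro s hs hcard
        rw [Finset.subset_empty.mp hs, Finset.card_empty] at hcard
        omega
      rcases Nat.eq_zero_or_pos m₁ with hm1 | hm1
      · refine ⟨0, fun α _ c X _ => ⟨true, ∅, Finset.empty_subset X, by simp; omega, ?_⟩⟩
        intro s hs hcard
        rw [Finset.subset_empty.mp hs, Finset.card_empty] at hcard
        omega
      obtain ⟨p₀, hp₀⟩ := ihn (m₀ - 1) m₁ (by omega)
      obtain ⟨p₁, hp₁⟩ := ihn m₀ (m₁ - 1) (by omega)
      obtain ⟨q, hq⟩ := ih p₀ p₁
      refine ⟨q + 1, ?_⟩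
      intro α _ c X hX
      obtain ⟨x, hxX⟩ := Finset.card_pos.mp (by omega : 0 < X.card)
      have hX' : q ≤ (X.erase x).card := by
        rw [Finset.card_erase_of_mem hxX]; omega
      obtain ⟨b', Z, hZX, hZcard, hZ⟩ := hq α (fun s => c (insert x s)) (X.erase x) hX'
      have hZX' : Z ⊆ X := hZX.trans (Finset.erase_subset _ _)
      have key : ∀ (Y : Finset α), Y ⊆ Z →
          (∀ s ⊆ Y, s.card = l + 1 → c s = b') →
          ∀ s ⊆ insert x Y, s.card = l + 1 → c s = b' := by
        intro Y hYZ hY s hs hcard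
        by_cases hxs : x ∈ s
        · have h1 : s.erase x ⊆ Y := by
            intro a ha
            rcases Finset.mem_insert.mp (hs (Finset.mem_of_mem_erase ha)) with h | h
            · exact absurd h (Finset.ne_of_mem_erase ha)
            · exact h
          have h2 : (s.erase x).card = l := by
            rw [Finset.card_erase_of_mem hxs, hcard]; omega
          have := hZ (s.erase x) (h1.trans hYZ) h2
          simpa [Finset.insert_erase hxs] using this
        · refine hY s ?_ hcard
          intro a ha
          rcases Finset.mem_insert.mp (hs ha) with h | h
          · exact absurd (h ▸ ha) hxs
          · exact h
      have hxZ : x ∉ Z := fun h => Finset.notMem_erase x X (hZX h)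
      cases b' with
      | false =>
        obtain ⟨b, Y, hYZ, hYcard, hY⟩ := hp₀ α c Z (by simpa using hZcard)
        cases b with
        | true =>
          exact ⟨true, Y, hYZ.trans hZX', by simpa using hYcard, hY⟩
        | false =>
          refine ⟨false, insert x Y, Finset.insert_subset hxX (hYZ.trans hZX'), ?_, ?_⟩
          · rw [Finset.card_insert_of_notMem (fun h => hxZ (hYZ h))]
            simp only [cond] at hYcard ⊢
            omega
          · exact key Y hYZ hY
      | true =>
        obtain ⟨b, Y, hYZ, hYcard, hY⟩ := hp₁ α c Z (by simpa using hZcard)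
        cases b with
        | false =>
          exact ⟨false, Y, hYZ.trans hZX', by simpa using hYcard, hY⟩
        | true =>
          refine ⟨true, insert x Y, Finset.insert_subset hxX (hYZ.trans hZX'), ?_, ?_⟩
          · rw [Finset.card_insert_of_notMem (fun h => hxZ (hYZ h))]
            simp only [cond] at hYcard ⊢
            omega
          · exact key Y hYZ hY

/-- Ramsey's theorem (finite version). -/
theorem stmt_0 (l m : ℕ) (hl : 0 < l) (hm : 0 < m) :
    ∃ p : ℕ, 0 < p ∧ ∀ (α : Type) [DecidableEq α] (X : Finset α), X.card = p →
      ∀ R B : Finset α → Prop,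
        (∀ s ⊆ X, s.card = l → R s ∨ B s) →
        ∃ Y ⊆ X, Y.card = m ∧
          ((∀ s ⊆ Y, s.card = l → R s) ∨ (∀ s ⊆ Y, s.card = l → B s)) := by
  classical
  obtain ⟨p, hp⟩ := ramsey_core l m m
  refine ⟨max p 1, lt_of_lt_of_le one_pos (le_max_right _ _), ?_⟩
  intro α _ X hX R B hcov
  obtain ⟨b, Y, hYX, hYcard, hY⟩ :=
    hp α (fun s => if R s then true else false) X (by rw [hX]; exact le_max_left _ _)
  have hm' : m ≤ Y.card := by cases b <;> simpa using hYcard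
  obtain ⟨Y', hY'Y, hY'card⟩ := Finset.exists_subset_card_eq hm'
  refine ⟨Y', hY'Y.trans hYX, hY'card, ?_⟩
  cases b with
  | true =>
    left
    intro s hs hcard
    have := hY s (hs.trans hY'Y) hcard
    by_contra h
    simp [h] at this
  | false =>
    right
    intro s hs hcard
    have hc := hY s (hs.trans hY'Y) hcard
    rcases hcov s (hs.trans (hY'Y.trans hYX)) hcard with h | h
    · simp [h] at hc
    · exact h
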